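/- For B > 1, the matrix H_N^{(1/B, B)} = −(1/B)|0⟩⟨0| − B|N⟩⟨N| + H_N^walk has eigenvalues exactly {−(B + 1/B)} ∪ {−2cos(kπ/(N+1)) : k = 1,...,N}. -/

import Mathlib

open Matrix Real Finset

/-- The negative adjacency matrix of the path on vertices `0,…,N`. -/
noncomputable def walkM (N : ℕ) : Matrix (Fin (N+1)) (Fin (N+1)) ℝ :=
  Matrix.of fun i j => if (i:ℕ)+1 = (j:ℕ) ∨ (j:ℕ)+1 = (i:ℕ) then -1 else 0

/-- `H_N^{(L,R)} = −L|0⟩⟨0| − R|N⟩⟨N| + H_N^walk`. -/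
noncomputable def HLR (N : ℕ) (L R : ℝ) : Matrix (Fin (N+1)) (Fin (N+1)) ℝ :=
  walkM N + Matrix.single 0 0 (-L)
    + Matrix.single (Fin.last N) (Fin.last N) (-R)

/-- `μ` is an eigenvalue of the real matrix `M`. -/
def hasEig {n : Type*} [Fintype n] (M : Matrix n n ℝ) (μ : ℝ) : Prop :=
  ∃ v : n → ℝ, v ≠ 0 ∧ M.mulVec v = μ • v

lemma sum_eq_of_nat (N m : ℕ) (F : Fin (N+1) → ℝ) :
    (∑ j : Fin (N+1), if m = (j:ℕ) then F j else 0) =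
      if h : m < N+1 then F ⟨m, h⟩ else 0 := by
  split_ifs with h
  · rw [Finset.sum_eq_single_of_mem ⟨m, h⟩ (Finset.mem_univ _)]
    · simp
    · intro j _ hj
      rw [if_neg]
      intro he
      exact hj (by apply Fin.ext; simp [← he])
  · apply Finset.sum_eq_zero
    intro j _
    rw [if_neg]
    have := j.isLt
    omega

lemma HLR_mulVec (N : ℕ) (L R : ℝ) (v : Fin (N+1) → ℝ) (i : Fin (N+1)) :
    (HLR N L R).mulVec v i =
      (if h : (i:ℕ)+1 < N+1 then -v ⟨(i:ℕ)+1, h⟩ else 0)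
      + (if h : 1 ≤ (i:ℕ) then -v ⟨(i:ℕ)-1, by omega⟩ else 0)
      + (if (i:ℕ) = 0 then -L * v 0 else 0)
      + (if (i:ℕ) = N then -R * v (Fin.last N) else 0) := by
  unfold HLR
  rw [Matrix.add_mulVec, Matrix.add_mulVec]
  simp only [Pi.add_apply]
  have hwalk : (walkM N).mulVec v i
      = (if h : (i:ℕ)+1 < N+1 then -v ⟨(i:ℕ)+1, h⟩ else 0)
        + (if h : 1 ≤ (i:ℕ) then -v ⟨(i:ℕ)-1, by omega⟩ else 0) := by
    simp only [Matrix.mulVec, dotProduct]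
    have step : ∀ j : Fin (N+1),
        walkM N i j * v j
        = (if (i:ℕ)+1 = (j:ℕ) then -v j else 0)
          + (if 1 ≤ (i:ℕ) ∧ (i:ℕ)-1 = (j:ℕ) then -v j else 0) := by
      intro j
      simp only [walkM, Matrix.of_apply]
      by_cases h1 : (i:ℕ)+1 = (j:ℕ) <;> by_cases h2 : (j:ℕ)+1 = (i:ℕ)
      · omega
      · rw [if_pos (Or.inl h1), if_pos h1, if_neg (by omega)]; ring
      · rw [if_pos (Or.inr h2), if_neg h1, if_pos (by omega)]; ring
      · rw [if_neg (by tauto), if_neg h1, if_neg (by omega)]; ring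
    rw [Finset.sum_congr rfl (fun j _ => step j), Finset.sum_add_distrib]
    congr 1
    · rw [sum_eq_of_nat N ((i:ℕ)+1) (fun j => -v j)]
    · by_cases h : 1 ≤ (i:ℕ)
      · rw [dif_pos h]
        have h2 : ∀ j : Fin (N+1), (if 1 ≤ (i:ℕ) ∧ (i:ℕ)-1 = (j:ℕ) then -v j else 0)
            = (if (i:ℕ)-1 = (j:ℕ) then -v j else 0) := by
          intro j; by_cases hj : (i:ℕ)-1 = (j:ℕ)
          · rw [if_pos ⟨h, hj⟩, if_pos hj]
          · rw [if_neg (by tauto), if_neg hj]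
        rw [Finset.sum_congr rfl (fun j _ => h2 j),
          sum_eq_of_nat N ((i:ℕ)-1) (fun j => -v j), dif_pos (by omega)]
      · rw [dif_neg h]
        apply Finset.sum_eq_zero
        intro j _
        rw [if_neg (by tauto)]
  have hs : ∀ (a : Fin (N+1)) (c : ℝ),
      (Matrix.single a a c).mulVec v i = if (i:ℕ) = (a:ℕ) then c * v a else 0 := by
    intro a c
    simp only [Matrix.mulVec, dotProduct]
    rw [Finset.sum_eq_single_of_mem a (Finset.mem_univ _)]
    · by_cases h : i = a
      · subst h; simp
      · simp only [Matrix.single, Matrix.of_apply]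
        rw [if_neg (by tauto), if_neg (by intro he; exact h (Fin.ext he))]
        ring
    · intro b _ hb
      simp only [Matrix.single, Matrix.of_apply]
      rw [if_neg (by tauto)]
      ring
  rw [hwalk, hs 0 (-L), hs (Fin.last N) (-R)]
  simp [Fin.val_zero, Fin.val_last]

lemma hasEig_of (N : ℕ) (B μ : ℝ) (hB : B ≠ 0) (g : ℕ → ℝ)
    (hrec : ∀ j : ℕ, g j + g (j+2) = -μ * g (j+1))
    (hleft : g 1 = B * g 0)
    (hright : g (N+2) = B * g (N+1))
    (hnz : g 1 ≠ 0) :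
    hasEig (HLR N (1/B) B) μ := by
  refine ⟨fun j => g ((j:ℕ)+1), ?_, ?_⟩
  · intro h
    have := congrFun h 0
    simp only [Pi.zero_apply, Fin.val_zero] at this
    exact hnz this
  · funext i
    rw [HLR_mulVec]
    simp only [Pi.smul_apply, smul_eq_mul, Fin.val_zero, Fin.val_last]
    have hi := i.isLt
    have h1 : B⁻¹ * g 1 = g 0 := by rw [hleft]; field_simp
    by_cases h0 : (i:ℕ) = 0 <;> by_cases hN : (i:ℕ) = N
    · -- i = 0 = N
      have hN0 : N = 0 := by omega
      subst hN0
      rw [dif_neg (by omega), dif_neg (by omega), if_pos h0, if_pos hN, h0]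
      have h3 := hrec 0
      have h4 : g 2 = B * g 1 := by simpa using hright
      norm_num at h3 ⊢
      linarith [h3, h1, h4]
    · -- i = 0 < N
      rw [dif_pos (by omega), dif_neg (by omega), if_pos h0, if_neg hN]
      have h3 := hrec 0
      simp only [h0]
      norm_num at h3 ⊢
      linarith [h3, h1]
    · -- i = N > 0
      rw [dif_neg (by omega), dif_pos (by omega), if_neg h0, if_pos hN]
      rw [show (i:ℕ)-1+1 = (i:ℕ) from by omega, hN]
      linarith [hrec N, hright]
    · -- interior
      rw [dif_pos (by omega), dif_pos (by omega), if_neg h0, if_neg hN]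
      rw [show (i:ℕ)-1+1 = (i:ℕ) from by omega, show (i:ℕ)+1+1 = (i:ℕ)+2 from rfl]
      linarith [hrec (i:ℕ)]

lemma eig_special (N : ℕ) (B : ℝ) (hB : 1 < B) :
    hasEig (HLR N (1/B) B) (-(B + 1/B)) := by
  have hB0 : B ≠ 0 := by positivity
  apply hasEig_of N B _ hB0 (fun j => B ^ j)
  · intro j
    have : B ^ (j+2) = B ^ j * B^2 := by ring
    have h2 : B ^ (j+1) = B ^ j * B := by ring
    rw [this, h2]
    field_simp
    ring
  · ring
  · ring
  · simpa using hB0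

lemma eig_cos (N k : ℕ) (hk1 : 1 ≤ k) (hk2 : k ≤ N) (B : ℝ) (hB : 1 < B) :
    hasEig (HLR N (1/B) B) (-2 * Real.cos ((k:ℝ) * π / ((N:ℝ) + 1))) := by
  have hB0 : B ≠ 0 := by positivity
  set θ : ℝ := (k:ℝ) * π / ((N:ℝ) + 1) with hθ
  have hN1 : ((N:ℝ) + 1) ≠ 0 := by positivity
  have hkey : ((N:ℝ)+1) * θ = (k:ℝ) * π := by rw [hθ]; field_simp
  have hθpos : 0 < θ := by
    apply div_pos
    · have : (0:ℝ) < (k:ℝ) := by exact_mod_cast hk1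
      positivity
    · positivity
  have hθlt : θ < π := by
    rw [hθ, div_lt_iff₀ (by positivity)]
    have hkN : (k:ℝ) < (N:ℝ) + 1 := by exact_mod_cast Nat.lt_succ_of_le hk2
    nlinarith [Real.pi_pos]
  have hsin : 0 < Real.sin θ := Real.sin_pos_of_pos_of_lt_pi hθpos hθlt
  apply hasEig_of N B _ hB0 (fun j => B * Real.sin ((j:ℝ) * θ) - Real.sin (((j:ℝ) - 1) * θ))
  · intro j
    push_cast
    have e1 : ((j:ℝ)+2) * θ = ((j:ℝ)*θ + θ) + θ := by ring
    have e2 : ((j:ℝ)+2-1) * θ = (j:ℝ)*θ + θ := by ring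
    have e3 : ((j:ℝ)+1) * θ = (j:ℝ)*θ + θ := by ring
    have e4 : ((j:ℝ)+1-1) * θ = (j:ℝ)*θ := by ring
    have e5 : ((j:ℝ)-1) * θ = (j:ℝ)*θ - θ := by ring
    rw [e1, e2, e3, e4, e5, Real.sin_add, Real.sin_add, Real.cos_add, Real.sin_sub]
    linear_combination (-B * Real.sin ((j:ℝ)*θ)) * (Real.sin_sq_add_cos_sq θ)
  · push_cast
    norm_num
  · push_cast
    have e1 : ((N:ℝ)+2) * θ = (k:ℝ)*π + θ := by rw [← hkey]; ring
    have e2 : ((N:ℝ)+2-1) * θ = (k:ℝ)*π := by rw [← hkey]; ring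
    have e3 : ((N:ℝ)+1) * θ = (k:ℝ)*π := hkey
    have e4 : ((N:ℝ)+1-1) * θ = (k:ℝ)*π - θ := by rw [← hkey]; ring
    rw [e1, e2, e3, e4, Real.sin_add, Real.sin_sub, Real.sin_nat_mul_pi]
    ring
  · push_cast
    norm_num
    exact ⟨hB0, ne_of_gt hsin⟩

/-- For `B > 1`, the eigenvalues of `H_N^{(1/B,B)}` are exactly
`−(B + 1/B)` together with `−2 cos (kπ/(N+1))` for `k = 1,…,N`. -/
theorem stmt_6 (N : ℕ) (B : ℝ) (hB : 1 < B) :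
    ∀ μ : ℝ, hasEig (HLR N (1/B) B) μ ↔
      (μ = -(B + 1/B) ∨ ∃ k : ℕ, 1 ≤ k ∧ k ≤ N ∧ μ = -2 * Real.cos (k * π / (N + 1))) := by
  have hB0 : B ≠ 0 := by positivity
  have hBpos : (0:ℝ) < B := by positivity
  have hBgt : 2 < B + 1/B := by
    have h2 : B + 1/B - 2 = (B-1)^2 / B := by field_simp; ring
    have h3 : 0 < (B-1)^2 / B := div_pos (by nlinarith) hBpos
    linarith
  have hmem : ∀ a : ℕ, a ≤ N → (a:ℝ) * π / ((N:ℝ)+1) ∈ Set.Icc 0 π := by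
    intro a ha
    constructor
    · positivity
    · rw [div_le_iff₀ (by positivity)]
      have : (a:ℝ) ≤ (N:ℝ) + 1 := by
        have : (a:ℝ) ≤ (N:ℝ) := by exact_mod_cast ha
        linarith
      nlinarith [Real.pi_pos]
  have fact1 : ∀ x : ℝ, -(B + 1/B) ≠ -2 * Real.cos x := by
    intro x h
    nlinarith [Real.cos_le_one x]
  have fact2 : ∀ a b : ℕ, 1 ≤ a → a ≤ N → 1 ≤ b → b ≤ N →
      -2 * Real.cos ((a:ℝ) * π / ((N:ℝ)+1)) = -2 * Real.cos ((b:ℝ) * π / ((N:ℝ)+1)) → a = b := by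
    intro a b ha1 ha2 hb1 hb2 h
    have hc : Real.cos ((a:ℝ) * π / ((N:ℝ)+1)) = Real.cos ((b:ℝ) * π / ((N:ℝ)+1)) := by linarith
    have heq := Real.injOn_cos (hmem a ha2) (hmem b hb2) hc
    have hN1 : ((N:ℝ)+1) ≠ 0 := by positivity
    field_simp [Real.pi_ne_zero] at heq
    exact_mod_cast heq
  intro μ
  constructor
  · intro hμ
    by_contra hnot
    push_neg at hnot
    obtain ⟨hne1, hne2⟩ := hnot
    set f : Module.End ℝ (Fin (N+1) → ℝ) := Matrix.mulVecLin (HLR N (1/B) B) with hf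
    have key : ∀ ν : ℝ, hasEig (HLR N (1/B) B) ν → ∃ v, f.HasEigenvector ν v := by
      rintro ν ⟨v, hv0, hv⟩
      refine ⟨v, Module.End.hasEigenvector_iff.mpr ⟨Module.End.mem_eigenspace_iff.mpr ?_, hv0⟩⟩
      simpa [hf, Matrix.mulVecLin_apply] using hv
    set E : Fin (N+2) → ℝ := fun i =>
      if (i:ℕ) = 0 then μ else if (i:ℕ) = 1 then -(B+1/B)
      else -2 * Real.cos (((((i:ℕ)-1 : ℕ)):ℝ) * π / ((N:ℝ)+1)) with hE
    have hE0 : ∀ i : Fin (N+2), (i:ℕ) = 0 → E i = μ := by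
      intro i h; simp only [hE]; rw [if_pos h]
    have hE1 : ∀ i : Fin (N+2), (i:ℕ) = 1 → E i = -(B+1/B) := by
      intro i h; simp only [hE]; rw [if_neg (by omega), if_pos h]
    have hE2 : ∀ i : Fin (N+2), ¬(i:ℕ) = 0 → ¬(i:ℕ) = 1 →
        E i = -2 * Real.cos (((((i:ℕ)-1 : ℕ)):ℝ) * π / ((N:ℝ)+1)) := by
      intro i h0 h1; simp only [hE]; rw [if_neg h0, if_neg h1]
    have hEig : ∀ i : Fin (N+2), ∃ v, f.HasEigenvector (E i) v := by
      intro i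
      by_cases h0 : (i:ℕ) = 0
      · rw [hE0 i h0]; exact key μ hμ
      · by_cases h1 : (i:ℕ) = 1
        · rw [hE1 i h1]; exact key _ (eig_special N B hB)
        · rw [hE2 i h0 h1]
          have hi := i.isLt
          exact key _ (eig_cos N ((i:ℕ)-1) (by omega) (by omega) B hB)
    choose W hW using hEig
    have hinj : Function.Injective E := by
      intro a b hab
      have ha := a.isLt
      have hb := b.isLt
      apply Fin.ext
      by_cases ha0 : (a:ℕ) = 0 <;> by_cases hb0 : (b:ℕ) = 0
      · omega
      · by_cases hb1 : (b:ℕ) = 1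
        · rw [hE0 a ha0, hE1 b hb1] at hab; exact absurd hab hne1
        · rw [hE0 a ha0, hE2 b hb0 hb1] at hab
          exact absurd hab (hne2 ((b:ℕ)-1) (by omega) (by omega))
      · by_cases ha1 : (a:ℕ) = 1
        · rw [hE1 a ha1, hE0 b hb0] at hab; exact absurd hab.symm hne1
        · rw [hE2 a ha0 ha1, hE0 b hb0] at hab
          exact absurd hab.symm (hne2 ((a:ℕ)-1) (by omega) (by omega))
      · by_cases ha1 : (a:ℕ) = 1 <;> by_cases hb1 : (b:ℕ) = 1
        · omega
        · rw [hE1 a ha1, hE2 b hb0 hb1] at hab; exact absurd hab (fact1 _)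
        · rw [hE2 a ha0 ha1, hE1 b hb1] at hab; exact absurd hab.symm (fact1 _)
        · rw [hE2 a ha0 ha1, hE2 b hb0 hb1] at hab
          have := fact2 ((a:ℕ)-1) ((b:ℕ)-1) (by omega) (by omega) (by omega) (by omega) hab
          omega
    have li := Module.End.eigenvectors_linearIndependent' f E hinj W hW
    have hcard := li.fintype_card_le_finrank
    rw [Module.finrank_fintype_fun_eq_card] at hcard
    simp only [Fintype.card_fin] at hcard
    omega
  · rintro (rfl | ⟨k, hk1, hk2, rfl⟩)
    · exact eig_special N B hB
    · exact eig_cos N k hk1 hk2 B hB
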